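/- Let G be a graph on n vertices with m edges and minimum degree δ. Then ρ(G) ≤ (δ-1)/2 + √(2m - nδ + (δ+1)²/4). -/
import Mathlib


open SimpleGraph
open scoped Classical

/-- A graph is Hamilton-connected if every two distinct vertices are joined by a Hamilton path. -/
def HamiltonConnected {V : Type*} (G : SimpleGraph V) : Prop :=
  ∀ u v : V, u ≠ v → ∃ p : G.Walk u v, p.IsHamiltonian

/-- The real adjacency matrix of a graph. -/
noncomputable def adjMat {V : Type*} (G : SimpleGraph V) : Matrix V V ℝ :=
  fun i j => if G.Adj i j then 1 else 0

/-- The signless Laplacian matrix `Q(G) = D(G) + A(G)`. -/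
noncomputable def signlessLap {V : Type*} [Fintype V] (G : SimpleGraph V) : Matrix V V ℝ :=
  Matrix.diagonal (fun v => ((G.neighborSet v).ncard : ℝ)) + adjMat G

/-- The spectral radius of a graph: the largest eigenvalue of its adjacency matrix. -/
noncomputable def specRad {V : Type*} [Fintype V] (G : SimpleGraph V) : ℝ :=
  sSup {μ : ℝ | ∃ x : V → ℝ, x ≠ 0 ∧ (adjMat G).mulVec x = μ • x}

/-- The signless Laplacian spectral radius of a graph. -/
noncomputable def qRad {V : Type*} [Fintype V] (G : SimpleGraph V) : ℝ :=
  sSup {μ : ℝ | ∃ x : V → ℝ, x ≠ 0 ∧ (signlessLap G).mulVec x = μ • x}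

/-- The join `G ∨ H` of two graphs. -/
def djoin {α β : Type*} (G : SimpleGraph α) (H : SimpleGraph β) : SimpleGraph (α ⊕ β) :=
  SimpleGraph.fromRel (fun x y =>
    (∃ a b, G.Adj a b ∧ x = Sum.inl a ∧ y = Sum.inl b) ∨
    (∃ a b, H.Adj a b ∧ x = Sum.inr a ∧ y = Sum.inr b) ∨
    (∃ a b, x = Sum.inl a ∧ y = Sum.inr b))

/-- `S_n^k = K_k ∨ (K_{n-(2k-1)} + (k-1)K_1)`. -/
def Sgraph (n k : ℕ) : SimpleGraph (Fin k ⊕ (Fin (n - (2 * k - 1)) ⊕ Fin (k - 1))) :=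
  djoin ⊤ ((⊤ : SimpleGraph (Fin (n - (2 * k - 1)))) ⊕g (⊥ : SimpleGraph (Fin (k - 1))))

/-- `T_n^k = K_2 ∨ (K_{n-(k+1)} + K_{k-1})`. -/
def Tgraph (n k : ℕ) : SimpleGraph (Fin 2 ⊕ (Fin (n - (k + 1)) ⊕ Fin (k - 1))) :=
  djoin ⊤ ((⊤ : SimpleGraph (Fin (n - (k + 1)))) ⊕g (⊤ : SimpleGraph (Fin (k - 1))))

/-- `G` is (isomorphic to) a graph obtained from `S` by deleting exactly `t` edges, keeping
minimum degree at least 3. -/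
def DelFam {α β : Type*} (S : SimpleGraph β) (t : ℕ) (G : SimpleGraph α) : Prop :=
  ∃ H : SimpleGraph β, H ≤ S ∧ (S.edgeSet \ H.edgeSet).ncard = t ∧
    (∀ v, 3 ≤ (H.neighborSet v).ncard) ∧ Nonempty (G ≃g H)

/-- The graph `K_{n-1} + e + e'`: a complete graph on `n-1` vertices together with one extra
vertex joined to two vertices of the complete graph by the edges `e` and `e'`. -/
def KnEE (n : ℕ) : SimpleGraph (Fin (n - 1) ⊕ Fin 1) :=
  SimpleGraph.fromRel (fun x y =>
    (∃ a b : Fin (n - 1), x = Sum.inl a ∧ y = Sum.inl b) ∨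
    (∃ a : Fin (n - 1), (a : ℕ) ≤ 1 ∧ x = Sum.inl a ∧ ∃ b, y = Sum.inr b))

/-- The Kelmans transformation of `G` with respect to the vertices `u` and `v`: every edge
`vx` with `x ∈ N(v) \ N[u]` is replaced by the edge `ux`. -/
def kelmans {V : Type*} (G : SimpleGraph V) (u v : V) : SimpleGraph V :=
  SimpleGraph.fromRel (fun x y =>
    (x = u ∧ y ≠ v ∧ (G.Adj u y ∨ G.Adj v y)) ∨
    (x = v ∧ y ≠ u ∧ G.Adj v y ∧ G.Adj u y) ∨
    (x = u ∧ y = v ∧ G.Adj u v) ∨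
    (x ≠ u ∧ x ≠ v ∧ y ≠ u ∧ y ≠ v ∧ G.Adj x y))

set_option maxHeartbeats 2000000 in
theorem statement_16 (n : ℕ) (G : SimpleGraph (Fin n)) (m δ : ℕ)
    (hm : m = G.edgeSet.ncard) (hδ : δ = ⨅ v, (G.neighborSet v).ncard) :
    specRad G ≤ ((δ : ℝ) - 1) / 2 +
      Real.sqrt (2 * (m : ℝ) - (n : ℝ) * (δ : ℝ) + ((δ : ℝ) + 1) ^ 2 / 4) := by
  classical
  have hA0 : ∀ i j, (0:ℝ) ≤ adjMat G i j := by
    intro i j; unfold adjMat; split <;> norm_num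
  have hA1 : ∀ i j, adjMat G i j ≤ 1 := by
    intro i j; unfold adjMat; split <;> norm_num
  have hAsym : ∀ i j, adjMat G i j = adjMat G j i := by
    intro i j; unfold adjMat
    by_cases h : G.Adj i j
    · rw [if_pos h, if_pos h.symm]
    · rw [if_neg h, if_neg (fun h' => h h'.symm)]
  have hAdiag : ∀ i, adjMat G i i = 0 := by
    intro i; unfold adjMat; rw [if_neg (G.irrefl)]
  set D : Fin n → ℝ := fun v => ∑ j, adjMat G v j with hDdef
  have hDnat : ∀ v, D v = (G.degree v : ℝ) := by
    intro v
    have h1 : D v = ∑ j, (if G.Adj v j then (1:ℝ) else 0) := rfl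
    rw [h1, Finset.sum_boole]
    congr 1
    rw [← SimpleGraph.card_neighborFinset_eq_degree, SimpleGraph.neighborFinset_eq_filter]
  have hcol : ∀ w, ∑ j, adjMat G j w = D w := by
    intro w
    rw [hDdef]
    exact Finset.sum_congr rfl (fun j _ => hAsym j w)
  have hdegδ : ∀ v, δ ≤ G.degree v := by
    intro v
    rw [hδ]
    have h2 : (G.neighborSet v).ncard = G.degree v := by
      rw [Set.ncard_eq_toFinset_card', ← SimpleGraph.neighborFinset_def,
        SimpleGraph.card_neighborFinset_eq_degree]
    exact h2 ▸ ciInf_le (OrderBot.bddBelow _) v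
  have hδle : ∀ v, (δ:ℝ) ≤ D v := by
    intro v; rw [hDnat v]; exact_mod_cast hdegδ v
  have hD0 : ∀ v, (0:ℝ) ≤ D v := by
    intro v; rw [hDnat v]; positivity
  have hsum2m : ∑ v, G.degree v = 2 * m := by
    rw [hm, SimpleGraph.sum_degrees_eq_twice_card_edges]
    congr 1
    rw [SimpleGraph.edgeFinset, ← Set.ncard_eq_toFinset_card']
  have hsumD : ∑ v, D v = 2 * (m:ℝ) := by
    have : ∑ v, D v = ((∑ v, G.degree v : ℕ) : ℝ) := by
      rw [Nat.cast_sum]; exact Finset.sum_congr rfl (fun v _ => hDnat v)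
    rw [this, hsum2m]; push_cast; ring
  have h2m : (n:ℝ) * δ ≤ 2 * m := by
    have h1 : n * δ ≤ 2 * m := by
      calc n * δ = ∑ _v : Fin n, δ := by simp [Finset.sum_const, mul_comm]
      _ ≤ ∑ v, G.degree v := Finset.sum_le_sum (fun v _ => hdegδ v)
      _ = 2 * m := hsum2m
    exact_mod_cast h1
  have harg : (0:ℝ) ≤ 2 * (m : ℝ) - (n : ℝ) * (δ : ℝ) + ((δ : ℝ) + 1) ^ 2 / 4 := by
    have h1 : (0:ℝ) ≤ ((δ:ℝ)+1)^2 := sq_nonneg _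
    linarith
  set R : ℝ := ((δ : ℝ) - 1) / 2 +
      Real.sqrt (2 * (m : ℝ) - (n : ℝ) * (δ : ℝ) + ((δ : ℝ) + 1) ^ 2 / 4) with hRdef
  have hsqrtlow : ((δ:ℝ)+1)/2 ≤ Real.sqrt (2 * (m : ℝ) - (n : ℝ) * (δ : ℝ) + ((δ : ℝ) + 1) ^ 2 / 4) := by
    have h1 : ((δ:ℝ)+1)/2 = Real.sqrt ((((δ:ℝ)+1)/2)^2) := (Real.sqrt_sq (by positivity)).symm
    rw [h1]
    apply Real.sqrt_le_sqrt
    have : (((δ:ℝ)+1)/2)^2 = ((δ:ℝ)+1)^2/4 := by ring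
    rw [this]; linarith
  have hδR : (δ:ℝ) ≤ R := by rw [hRdef]; linarith
  have hR0 : (0:ℝ) ≤ R := le_trans (by positivity) hδR
  show specRad G ≤ R
  unfold specRad
  refine Real.sSup_le ?_ hR0
  rintro μ ⟨x, hx, hxe⟩
  rcases le_or_gt μ 0 with hμneg | hμpos
  · exact le_trans hμneg hR0
  have hμ0 : (0:ℝ) ≤ μ := hμpos.le
  obtain ⟨i0, hi0⟩ : ∃ i, x i ≠ 0 := by
    by_contra h; push_neg at h; exact hx (funext h)
  haveI : Nonempty (Fin n) := ⟨i0⟩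
  set y : Fin n → ℝ := fun i => |x i| with hydef
  have hy0 : ∀ i, 0 ≤ y i := fun i => abs_nonneg _
  have hyi0 : 0 < y i0 := abs_pos.mpr hi0
  have hEig : ∀ i, ∑ j, adjMat G i j * x j = μ * x i := by
    intro i
    have h1 := congrFun hxe i
    simpa [Matrix.mulVec, dotProduct] using h1
  have hsub : ∀ i, μ * y i ≤ ∑ j, adjMat G i j * y j := by
    intro i
    calc μ * y i = |μ * x i| := by rw [abs_mul, abs_of_nonneg hμ0]
    _ = |∑ j, adjMat G i j * x j| := by rw [hEig i]
    _ ≤ ∑ j, |adjMat G i j * x j| := Finset.abs_sum_le_sum_abs _ _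
    _ = ∑ j, adjMat G i j * y j := by
        refine Finset.sum_congr rfl (fun j _ => ?_)
        rw [abs_mul, abs_of_nonneg (hA0 i j)]
  -- key combinatorial inequality
  have hkey : ∀ (e:ℝ), 0 ≤ e → (∀ v, e ≤ D v) → ∀ w,
      ∑ j, adjMat G j w * D j ≤ 2*(m:ℝ) - e*n + e * D w - D w + e := by
    intro e he heD w
    have hlow : ∑ j, ((1 - adjMat G j w) * e + (if j = w then D w - e else 0))
        ≤ ∑ j, (1 - adjMat G j w) * D j := by
      refine Finset.sum_le_sum (fun j _ => ?_)
      by_cases hj : j = w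
      · subst hj
        rw [if_pos rfl, hAdiag j]
        ring_nf
        linarith
      · rw [if_neg hj, add_zero]
        have h1 : (0:ℝ) ≤ 1 - adjMat G j w := by linarith [hA1 j w]
        exact mul_le_mul_of_nonneg_left (heD j) h1
    have hsum1 : ∑ j, ((1 - adjMat G j w) * e + (if j = w then D w - e else 0))
        = ((n:ℝ) - D w) * e + (D w - e) := by
      rw [Finset.sum_add_distrib]
      congr 1
      · rw [← Finset.sum_mul]
        congr 1
        rw [Finset.sum_sub_distrib, hcol w]
        simp
      · simp
    have heq : ∑ j, adjMat G j w * D j = (∑ j, D j) - ∑ j, (1 - adjMat G j w) * D j := by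
      rw [← Finset.sum_sub_distrib]
      exact Finset.sum_congr rfl (fun j _ => by ring)
    rw [heq, hsumD]
    rw [hsum1] at hlow
    linarith
  rcases Nat.eq_zero_or_pos δ with hδ0 | hδpos
  · -- δ = 0 : Stanley-type bound μ² + μ ≤ 2m
    obtain ⟨u, hu⟩ := Finite.exists_max y
    have hyu : 0 < y u := lt_of_lt_of_le hyi0 (hu i0)
    have hμd : μ ≤ D u := by
      have h1 : μ * y u ≤ D u * y u := by
        calc μ * y u ≤ ∑ j, adjMat G u j * y j := hsub u
        _ ≤ ∑ j, adjMat G u j * y u :=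
            Finset.sum_le_sum (fun j _ => mul_le_mul_of_nonneg_left (hu j) (hA0 u j))
        _ = D u * y u := by rw [← Finset.sum_mul]
      exact le_of_mul_le_mul_right h1 hyu
    have hμ2 : μ^2 ≤ 2*(m:ℝ) - D u := by
      have h2 : μ^2 * y u ≤ (2*(m:ℝ) - D u) * y u := by
        calc μ^2 * y u = μ * (μ * y u) := by ring
        _ ≤ μ * (∑ j, adjMat G u j * y j) := mul_le_mul_of_nonneg_left (hsub u) hμ0
        _ = ∑ j, adjMat G u j * (μ * y j) := by
            rw [Finset.mul_sum]; exact Finset.sum_congr rfl (fun j _ => by ring)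
        _ ≤ ∑ j, adjMat G u j * (∑ w, adjMat G j w * y w) :=
            Finset.sum_le_sum (fun j _ => mul_le_mul_of_nonneg_left (hsub j) (hA0 u j))
        _ ≤ ∑ j, adjMat G u j * (D j * y u) := by
            refine Finset.sum_le_sum (fun j _ => mul_le_mul_of_nonneg_left ?_ (hA0 u j))
            calc ∑ w, adjMat G j w * y w ≤ ∑ w, adjMat G j w * y u :=
                Finset.sum_le_sum (fun w _ => mul_le_mul_of_nonneg_left (hu w) (hA0 j w))
            _ = D j * y u := by rw [← Finset.sum_mul]
        _ = (∑ j, adjMat G j u * D j) * y u := by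
            rw [Finset.sum_mul]
            exact Finset.sum_congr rfl (fun j _ => by rw [hAsym u j]; ring)
        _ ≤ (2*(m:ℝ) - D u) * y u := by
            refine mul_le_mul_of_nonneg_right ?_ hyu.le
            have h3 := hkey 0 le_rfl hD0 u
            linarith
      exact le_of_mul_le_mul_right h2 hyu
    have hfin : μ^2 + μ ≤ 2*(m:ℝ) := by linarith
    have h12 : μ + 1/2 ≤ Real.sqrt (2*(m:ℝ) + 1/4) := by
      have h4 : (μ + 1/2)^2 ≤ 2*(m:ℝ) + 1/4 := by nlinarith
      have h5 := Real.sqrt_le_sqrt h4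
      rwa [Real.sqrt_sq (by linarith : (0:ℝ) ≤ μ + 1/2)] at h5
    rw [hRdef, hδ0]
    push_cast
    have h6 : 2*(m:ℝ) - (n:ℝ) * 0 + ((0:ℝ)+1)^2/4 = 2*(m:ℝ) + 1/4 := by ring
    rw [h6]
    linarith
  · -- δ ≥ 1 : recurrence argument
    have hδ1 : (1:ℝ) ≤ (δ:ℝ) := by exact_mod_cast hδpos
    set C : ℝ := 2*(m:ℝ) - ((n:ℝ) - 1) * δ with hCdef
    have hCδ : (δ:ℝ) ≤ C := by rw [hCdef]; linarith
    have hC0 : (0:ℝ) < C := lt_of_lt_of_le (by linarith) hCδ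
    have hRpos : (0:ℝ) < R := lt_of_lt_of_le (by linarith) hδR
    have hRquad : R^2 = ((δ:ℝ) - 1) * R + C := by
      have hs2 := Real.sq_sqrt harg
      rw [hRdef, hCdef]
      nlinarith [hs2]
    set z : ℕ → Fin n → ℝ :=
      fun k => Nat.rec y (fun _ w => fun i => ∑ j, adjMat G i j * w j) k with hzdef
    have hz0 : ∀ k i, 0 ≤ z k i := by
      intro k
      induction k with
      | zero => exact hy0
      | succ k ih =>
          intro i
          exact Finset.sum_nonneg (fun j _ => mul_nonneg (hA0 i j) (ih j))
    have hzsucc : ∀ k i, z (k+1) i = ∑ j, adjMat G i j * z k j := fun k i => rfl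
    have hzlow : ∀ k i, μ^k * y i ≤ z k i := by
      intro k
      induction k with
      | zero => intro i; rw [pow_zero, one_mul]; exact le_rfl
      | succ k ih =>
          intro i
          have h1 : μ^(k+1) * y i ≤ μ^k * ∑ j, adjMat G i j * y j := by
            have := mul_le_mul_of_nonneg_left (hsub i) (pow_nonneg hμ0 k)
            calc μ^(k+1) * y i = μ^k * (μ * y i) := by ring
            _ ≤ μ^k * ∑ j, adjMat G i j * y j := this
          calc μ^(k+1) * y i ≤ μ^k * ∑ j, adjMat G i j * y j := h1
          _ = ∑ j, adjMat G i j * (μ^k * y j) := by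
              rw [Finset.mul_sum]; exact Finset.sum_congr rfl (fun j _ => by ring)
          _ ≤ ∑ j, adjMat G i j * z k j :=
              Finset.sum_le_sum (fun j _ => mul_le_mul_of_nonneg_left (ih j) (hA0 i j))
          _ = z (k+1) i := (hzsucc k i).symm
    set W : ℕ → ℝ := fun k => ∑ i, z k i with hWdef
    have hW0pos : 0 < W 0 :=
      Finset.sum_pos' (fun i _ => hy0 i) ⟨i0, Finset.mem_univ _, hyi0⟩
    have hWlow : ∀ k, μ^k * W 0 ≤ W k := by
      intro k
      rw [hWdef, Finset.mul_sum]
      exact Finset.sum_le_sum (fun i _ => hzlow k i)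
    have hWsucc : ∀ k, W (k+1) = ∑ j, D j * z k j := by
      intro k
      calc W (k+1) = ∑ i, ∑ j, adjMat G i j * z k j :=
          Finset.sum_congr rfl (fun i _ => hzsucc k i)
      _ = ∑ j, ∑ i, adjMat G i j * z k j := Finset.sum_comm
      _ = ∑ j, D j * z k j := by
          refine Finset.sum_congr rfl (fun j _ => ?_)
          rw [← Finset.sum_mul, hcol j]
    have hWrec : ∀ k, W (k+2) ≤ C * W k + ((δ:ℝ) - 1) * W (k+1) := by
      intro k
      have h1 : W (k+2) = ∑ w, (∑ j, adjMat G j w * D j) * z k w := by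
        rw [hWsucc (k+1)]
        calc ∑ j, D j * z (k+1) j
            = ∑ j, ∑ w, D j * (adjMat G j w * z k w) := by
              refine Finset.sum_congr rfl (fun j _ => ?_)
              rw [hzsucc k j, Finset.mul_sum]
          _ = ∑ w, ∑ j, D j * (adjMat G j w * z k w) := Finset.sum_comm
          _ = ∑ w, (∑ j, adjMat G j w * D j) * z k w := by
              refine Finset.sum_congr rfl (fun w _ => ?_)
              rw [Finset.sum_mul]
              exact Finset.sum_congr rfl (fun j _ => by ring)
      rw [h1]
      calc ∑ w, (∑ j, adjMat G j w * D j) * z k w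
            ≤ ∑ w, (C + ((δ:ℝ) - 1) * D w) * z k w := by
              refine Finset.sum_le_sum (fun w _ => ?_)
              refine mul_le_mul_of_nonneg_right ?_ (hz0 k w)
              have h2 := hkey (δ:ℝ) (by linarith) hδle w
              rw [hCdef]
              linarith
        _ = C * W k + ((δ:ℝ) - 1) * W (k+1) := by
              rw [hWsucc k, hWdef]
              rw [Finset.sum_congr rfl
                (fun w _ => (by ring : (C + ((δ:ℝ) - 1) * D w) * z k w
                  = C * z k w + ((δ:ℝ) - 1) * (D w * z k w)))]
              rw [Finset.sum_add_distrib, ← Finset.mul_sum, ← Finset.mul_sum]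
    set M : ℝ := max (W 0) (W 1 / R) with hMdef
    have hM : ∀ k, W k ≤ M * R^k ∧ W (k+1) ≤ M * R^(k+1) := by
      intro k
      induction k with
      | zero =>
          constructor
          · rw [pow_zero, mul_one]; exact le_max_left _ _
          · have h1 : W 1 / R ≤ M := le_max_right _ _
            have h2 : W 1 = W 1 / R * R := by field_simp
            have h3 : W 1 ≤ M * R := by
              rw [h2]; exact mul_le_mul_of_nonneg_right h1 hRpos.le
            simpa using h3
      | succ k ih =>
          refine ⟨ih.2, ?_⟩
          calc W (k+2) ≤ C * W k + ((δ:ℝ) - 1) * W (k+1) := hWrec k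
          _ ≤ C * (M * R^k) + ((δ:ℝ) - 1) * (M * R^(k+1)) :=
              add_le_add (mul_le_mul_of_nonneg_left ih.1 hC0.le)
                (mul_le_mul_of_nonneg_left ih.2 (by linarith))
          _ = M * R^k * (((δ:ℝ) - 1) * R + C) := by ring
          _ = M * R^(k+2) := by rw [← hRquad]; ring
    by_contra hcon
    push_neg at hcon
    have h1 : 1 < μ / R := (one_lt_div hRpos).mpr hcon
    obtain ⟨k, hk⟩ := pow_unbounded_of_one_lt (M / W 0) h1
    have h2 : μ^k * W 0 ≤ M * R^k := le_trans (hWlow k) (hM k).1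
    rw [div_pow, div_lt_div_iff₀ hW0pos (pow_pos hRpos k)] at hk
    linarith
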